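/- There exists a function f : ℕ → ℕ such that for every natural number n the following holds: if G is a locally finite group and α is an automorphism of G with α ∘ α = id such that Fix(α) has at most n elements, then the subgroup [G,α] has index at most n in G, and every element of [G,α] is a product of at most f(n) elements of the form g⁻¹·α(g) with g ∈ G. -/
import Mathlib

open Pointwise

private lemma aux_pow_inv {G : Type*} [Group G] [DecidableEq G] {S : Finset G}
    (hS : S⁻¹ = S) : ∀ k, (S ^ k)⁻¹ = S ^ k
  | 0 => by simp
  | (k+1) => by
    rw [pow_succ, mul_inv_rev, hS, aux_pow_inv hS k, ← pow_succ', ← pow_succ]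

private lemma aux_key {G : Type*} [Group G] [DecidableEq G] {S : Finset G}
    (h1 : (1:G) ∈ S) (hS : S⁻¹ = S) {k : ℕ} (hne : S ^ (k+2) ≠ S ^ (k+1)) :
    (S ^ k).card + S.card ≤ (S ^ (k+3)).card := by
  have hsub : S ^ (k+1) ⊆ S ^ (k+2) := Finset.pow_subset_pow_right h1 (by omega)
  obtain ⟨x, hx2, hx1⟩ := Finset.exists_of_ssubset ⟨hsub, fun h => hne (le_antisymm h hsub)⟩
  have hdisj : Disjoint (S ^ k) (x • S) := by
    rw [Finset.disjoint_right]
    rintro a ha hak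
    obtain ⟨b, hb, rfl⟩ := Finset.mem_smul_finset.mp ha
    apply hx1
    have hbinv : b⁻¹ ∈ S := by rw [← hS]; exact Finset.inv_mem_inv hb
    have : (x * b) * b⁻¹ ∈ S ^ k * S := Finset.mul_mem_mul hak hbinv
    simpa [mul_assoc, ← pow_succ] using this
  have hunion : S ^ k ∪ x • S ⊆ S ^ (k+3) := by
    apply Finset.union_subset
    · exact Finset.pow_subset_pow_right h1 (by omega)
    · intro a ha
      obtain ⟨b, hb, rfl⟩ := Finset.mem_smul_finset.mp ha
      have : x * b ∈ S ^ (k+2) * S := Finset.mul_mem_mul hx2 hb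
      simpa [← pow_succ] using this
  calc (S ^ k).card + S.card = (S ^ k).card + (x • S).card := by
        rw [Finset.card_smul_finset]
    _ = (S ^ k ∪ x • S).card := (Finset.card_union_of_disjoint hdisj).symm
    _ ≤ (S ^ (k+3)).card := Finset.card_le_card hunion

private lemma aux_grow {G : Type*} [Group G] [DecidableEq G] {S : Finset G}
    (h1 : (1:G) ∈ S) (hS : S⁻¹ = S) :
    ∀ j, (∀ k, 1 ≤ k → k ≤ 3*j → S ^ (k+1) ≠ S ^ k) →
      S.card * (j+1) ≤ (S ^ (3*j+1)).card
  | 0, _ => by simp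
  | (j+1), h => by
    have ih := aux_grow h1 hS j (fun k hk1 hk2 => h k hk1 (by omega))
    have hne : S ^ ((3*j+1)+2) ≠ S ^ ((3*j+1)+1) := by
      have := h (3*j+2) (by omega) (by omega)
      simpa [show 3*j+1+2 = 3*j+2+1 by omega, show 3*j+1+1 = 3*j+2 by omega] using this
    have hk := aux_key h1 hS hne
    have : 3*(j+1)+1 = (3*j+1)+3 := by omega
    rw [this]
    calc S.card * (j+1+1) = S.card * (j+1) + S.card := by ring
      _ ≤ (S ^ (3*j+1)).card + S.card := by omega
      _ ≤ (S ^ ((3*j+1)+3)).card := hk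

private lemma aux_stab {G : Type*} [Group G] [DecidableEq G] {S : Finset G} {k : ℕ}
    (hstab : S ^ (k+1) = S ^ k) : ∀ m, S ^ (k + m) = S ^ k
  | 0 => rfl
  | (m+1) => by
    have ih := aux_stab hstab m
    calc S ^ (k + (m+1)) = S ^ (k+m) * S := by rw [show k+(m+1) = (k+m)+1 by omega, pow_succ]
      _ = S ^ k * S := by rw [ih]
      _ = S ^ (k+1) := (pow_succ S k).symm
      _ = S ^ k := hstab

private lemma aux_growth {G : Type*} [Group G] [Fintype G] [DecidableEq G] (S : Finset G)
    (h1 : (1:G) ∈ S) (hS : S⁻¹ = S) (n : ℕ) (hcard : Fintype.card G ≤ n * S.card) :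
    ∀ x ∈ Subgroup.closure (S : Set G), x ∈ S ^ (3*n+1) := by
  have hSpos : 1 ≤ S.card := Finset.card_pos.mpr ⟨1, h1⟩
  obtain ⟨k, hk1, hk3, hstab⟩ : ∃ k, 1 ≤ k ∧ k ≤ 3*n ∧ S ^ (k+1) = S ^ k := by
    by_contra hcon
    push_neg at hcon
    have := aux_grow h1 hS n (fun k a b => hcon k a b)
    have hle : (S ^ (3*n+1)).card ≤ Fintype.card G := Finset.card_le_univ _
    nlinarith
  -- S ^ k is closed under the group operations
  have hmul : ∀ a ∈ S ^ k, ∀ b ∈ S ^ k, a * b ∈ S ^ k := by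
    intro a ha b hb
    have : a * b ∈ S ^ k * S ^ k := Finset.mul_mem_mul ha hb
    rwa [← pow_add, show k + k = k + k from rfl, aux_stab hstab k] at this
  have hinv : ∀ a ∈ S ^ k, a⁻¹ ∈ S ^ k := by
    intro a ha
    rw [← aux_pow_inv hS k]
    exact Finset.inv_mem_inv ha
  intro x hx
  have hxk : x ∈ S ^ k := by
    induction hx using Subgroup.closure_induction with
    | mem y hy => exact Finset.pow_subset_pow_right h1 hk1 (by simpa using hy)
    | one => exact Finset.one_mem_pow h1
    | mul a b _ _ iha ihb => exact hmul a iha b ihb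
    | inv a _ iha => exact hinv a iha
  exact Finset.pow_subset_pow_right h1 (by omega) hxk

private lemma aux_pow_to_list {G : Type*} [Group G] [DecidableEq G] {S : Finset G}
    (α : G ≃* G) (hSim : ∀ y ∈ S, ∃ g : G, g⁻¹ * α g = y) :
    ∀ (m : ℕ) (x : G), x ∈ S ^ m →
      ∃ l : List G, l.length = m ∧ (l.map fun g => g⁻¹ * α g).prod = x
  | 0, x, hx => by
    refine ⟨[], rfl, ?_⟩
    simpa [Finset.mem_one] using (Finset.mem_one.mp (by simpa using hx)).symm
  | (m+1), x, hx => by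
    rw [pow_succ] at hx
    obtain ⟨y, hy, z, hz, rfl⟩ := Finset.mem_mul.mp hx
    obtain ⟨l, hl, hlp⟩ := aux_pow_to_list α hSim m y hy
    obtain ⟨g, hg⟩ := hSim z hz
    exact ⟨l ++ [g], by simp [hl], by simp [hlp, hg]⟩

private lemma aux_finite {G : Type*} [Group G] [Finite G] (α : G ≃* G)
    (hα : ∀ g, α (α g) = g) (n : ℕ) (hfix : {g : G | α g = g}.ncard ≤ n) :
    (Subgroup.closure {x : G | ∃ g : G, g⁻¹ * α g = x}).index ≤ n ∧
    ∀ x ∈ Subgroup.closure {x : G | ∃ g : G, g⁻¹ * α g = x},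
      ∃ l : List G, l.length ≤ 3*n+1 ∧ (l.map fun g => g⁻¹ * α g).prod = x := by
  classical
  cases nonempty_fintype G
  set φ : G → G := fun g => g⁻¹ * α g with hφ
  set S : Finset G := Finset.univ.image φ with hSdef
  have hScoe : (S : Set G) = {x : G | ∃ g : G, g⁻¹ * α g = x} := by
    ext x; simp [hSdef, hφ, eq_comm]
  have h1 : (1:G) ∈ S := by
    refine Finset.mem_image.mpr ⟨1, Finset.mem_univ _, ?_⟩; simp [hφ]
  have hSim : ∀ y ∈ S, ∃ g : G, g⁻¹ * α g = y := by
    intro y hy; obtain ⟨g, -, rfl⟩ := Finset.mem_image.mp hy; exact ⟨g, rfl⟩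
  have hSinv : S⁻¹ = S := by
    have hmem : ∀ y ∈ S, y⁻¹ ∈ S := by
      intro y hy
      obtain ⟨g, hg⟩ := hSim y hy
      refine Finset.mem_image.mpr ⟨α g, Finset.mem_univ _, ?_⟩
      simp [hφ, ← hg, hα]
    ext x
    constructor
    · intro hx
      obtain ⟨b, hb, rfl⟩ := Finset.mem_inv.mp hx
      exact hmem b hb
    · intro hx
      exact Finset.mem_inv.mpr ⟨x⁻¹, hmem x hx, inv_inv x⟩
  -- fiber counting
  have hcard : Fintype.card G ≤ n * S.card := by
    rw [show Fintype.card G = Finset.univ.card from rfl]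
    refine Finset.card_le_mul_card_image Finset.univ n ?_
    intro b hb
    obtain ⟨a0, -, ha0⟩ := Finset.mem_image.mp hb
    have hmaps : ∀ a ∈ Finset.univ.filter (fun x => φ x = b), a * a0⁻¹ ∈ {g : G | α g = g} := by
      intro a ha
      have haf : φ a = b := (Finset.mem_filter.mp ha).2
      have : a⁻¹ * α a = a0⁻¹ * α a0 := by
        rw [show a⁻¹ * α a = φ a from rfl, show a0⁻¹ * α a0 = φ a0 from rfl, haf, ha0]
      have hswap : α a * (α a0)⁻¹ = a * a0⁻¹ := by
        have := congrArg (fun t => a * t * (α a0)⁻¹) this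
        simpa [mul_assoc] using this
      show α (a * a0⁻¹) = a * a0⁻¹
      rw [map_mul, map_inv, hswap]
    calc (Finset.univ.filter (fun x => φ x = b)).card
        ≤ {g : G | α g = g}.toFinset.card := by
          refine Finset.card_le_card_of_injOn (fun a => a * a0⁻¹) ?_ ?_
          · intro a ha; simpa using hmaps a ha
          · intro a _ a' _ h
            simpa using mul_right_cancel h
      _ ≤ n := by rwa [← Set.ncard_eq_toFinset_card']
  constructor
  · -- index bound
    set H := Subgroup.closure {x : G | ∃ g : G, g⁻¹ * α g = x} with hH
    have hSsub : (S : Set G) ⊆ (H : Set G) := by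
      rw [hScoe]; exact Subgroup.subset_closure
    have hle : S.card ≤ Nat.card H := by
      rw [← Set.ncard_coe_finset, ← Nat.card_coe_set_eq]
      exact Nat.card_le_card_of_injective (Set.inclusion hSsub) (Set.inclusion_injective hSsub)
    have := Subgroup.index_mul_card H
    have hG : Nat.card G = Fintype.card G := Nat.card_eq_fintype_card
    have hpos : 0 < Nat.card H := Nat.card_pos
    nlinarith [this, hcard, hle, hpos]
  · intro x hx
    rw [← hScoe] at hx
    have hxp := aux_growth S h1 hSinv n hcard x hx
    obtain ⟨l, hl, hlp⟩ := aux_pow_to_list α hSim (3*n+1) x hxp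
    exact ⟨l, le_of_eq hl, hlp⟩

private lemma aux_K {G : Type} [Group G]
    (hLF : ∀ s : Finset G, (Subgroup.closure (s : Set G) : Set G).Finite)
    (α : G ≃* G) (hα : ∀ g, α (α g) = g) (n : ℕ)
    (hfixfin : {g : G | α g = g}.Finite) (hfix : {g : G | α g = g}.ncard ≤ n)
    (T0 : Finset G) :
    ∃ (K : Subgroup G) (β : K ≃* K),
      (∀ g ∈ T0, g ∈ K) ∧ (∀ k : K, (β k : G) = α k) ∧ Finite K ∧
      ((Subgroup.closure {y : K | ∃ k : K, k⁻¹ * β k = y}).index ≤ n ∧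
        ∀ x ∈ Subgroup.closure {y : K | ∃ k : K, k⁻¹ * β k = y},
          ∃ l : List K, l.length ≤ 3*n+1 ∧ (l.map fun k => k⁻¹ * β k).prod = x) ∧
      (Subgroup.closure {y : K | ∃ k : K, k⁻¹ * β k = y}).map K.subtype ≤
        Subgroup.closure {x : G | ∃ g : G, g⁻¹ * α g = x} := by
  classical
  set T : Finset G := T0 ∪ T0.image α with hT
  set K : Subgroup G := Subgroup.closure (T : Set G) with hK
  haveI hKfin : Finite K := Set.Finite.to_subtype (hLF T)
  have hαα : (⇑α) '' ((⇑α) '' (T0 : Set G)) = (T0 : Set G) := by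
    rw [Set.image_image]; simp [hα]
  have him : (⇑α) '' (T : Set G) = (T : Set G) := by
    rw [hT]
    push_cast
    rw [Set.image_union, hαα, Set.union_comm]
  have hKinv : K.map (α : G →* G) = K := by
    rw [hK, MonoidHom.map_closure]
    norm_num [him]
  set β : K ≃* K := (α.subgroupMap K).trans (MulEquiv.subgroupCongr hKinv) with hβ
  have hβcoe : ∀ k : K, (β k : G) = α k := fun k => rfl
  have hβα : ∀ k : K, β (β k) = k := by
    intro k
    apply Subtype.ext
    rw [hβcoe, hβcoe, hα]
  have hfixK : {k : K | β k = k}.ncard ≤ n := by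
    refine le_trans (Set.ncard_le_ncard_of_injOn Subtype.val ?_ ?_ hfixfin) hfix
    · intro k hk
      show α (k : G) = (k : G)
      rw [← hβcoe]
      exact congrArg Subtype.val hk
    · exact Subtype.val_injective.injOn
  have hmain := aux_finite β hβα n hfixK
  refine ⟨K, β, ?_, hβcoe, hKfin, hmain, ?_⟩
  · intro g hg
    exact Subgroup.subset_closure (by simp only [hT]; push_cast; exact Or.inl hg)
  · rw [MonoidHom.map_closure]
    apply Subgroup.closure_mono
    rintro _ ⟨y, ⟨k, rfl⟩, rfl⟩
    exact ⟨(k : G), by simp [hβcoe]⟩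

/-- There is a function `f : ℕ → ℕ` such that for every locally finite group `G` with an
involutory automorphism `α` fixing at most `n` elements, the subgroup `[G, α]` has index
at most `n` and every element of it is a product of at most `f n` elements of the form
`g⁻¹ * α g`. -/
theorem locallyFinite_involutory_automorphism_commutator_bounded :
    ∃ f : ℕ → ℕ, ∀ n : ℕ, ∀ (G : Type) [Group G],
      (∀ s : Finset G, (Subgroup.closure (s : Set G) : Set G).Finite) →
      ∀ α : G ≃* G, (∀ g, α (α g) = g) →
      {g : G | α g = g}.Finite → {g : G | α g = g}.ncard ≤ n →
      (Subgroup.closure {x : G | ∃ g : G, g⁻¹ * α g = x}).index ≤ n ∧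
      ∀ x ∈ Subgroup.closure {x : G | ∃ g : G, g⁻¹ * α g = x},
        ∃ l : List G, l.length ≤ f n ∧ (l.map fun g => g⁻¹ * α g).prod = x := by
  classical
  refine ⟨fun n => 3*n+1, fun n G _ hLF α hα hfixfin hfix => ?_⟩
  set Sset : Set G := {x : G | ∃ g : G, g⁻¹ * α g = x} with hSset
  set H : Subgroup G := Subgroup.closure Sset with hH
  constructor
  · -- index bound
    by_contra hlt
    push_neg at hlt
    have hcardQ : n + 1 ≤ Nat.card (G ⧸ H) := by
      rw [← Subgroup.index_eq_card]; omega
    haveI hfinQ : Finite (G ⧸ H) := (Nat.card_pos_iff.mp (by omega)).2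
    haveI : Fintype (G ⧸ H) := Fintype.ofFinite _
    have hcardQ' : n + 1 ≤ Fintype.card (G ⧸ H) := by rwa [← Nat.card_eq_fintype_card]
    obtain ⟨e⟩ : Nonempty (Fin (n+1) ↪ (G ⧸ H)) :=
      Function.Embedding.nonempty_of_card_le (by simpa using hcardQ')
    set r : Fin (n+1) → G := fun i => (e i).out with hr
    have hre : ∀ i, ((r i : G) : G ⧸ H) = e i := fun i => QuotientGroup.out_eq' _
    obtain ⟨K, β, hT0, hβcoe, hKfin, ⟨hidx, -⟩, hmaple⟩ :=
      aux_K hLF α hα n hfixfin hfix (Finset.univ.image r)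
    set HK := Subgroup.closure {y : K | ∃ k : K, k⁻¹ * β k = y} with hHK
    haveI := hKfin
    haveI : Finite (K ⧸ HK) := Quotient.finite _
    haveI : Fintype (K ⧸ HK) := Fintype.ofFinite _
    have hcards : Fintype.card (K ⧸ HK) ≤ n := by
      rw [← Nat.card_eq_fintype_card, ← Subgroup.index_eq_card]; exact hidx
    set rK : Fin (n+1) → K := fun i =>
      ⟨r i, hT0 _ (Finset.mem_image_of_mem r (Finset.mem_univ i))⟩ with hrK
    obtain ⟨i, j, hij, hEq⟩ := Fintype.exists_ne_map_eq_of_card_lt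
      (fun i => (QuotientGroup.mk (rK i) : K ⧸ HK)) (by simpa using Nat.lt_succ_of_le hcards)
    have hmem : (rK i)⁻¹ * rK j ∈ HK := QuotientGroup.eq.mp hEq
    have hinH : (r i)⁻¹ * r j ∈ H := hmaple ⟨(rK i)⁻¹ * rK j, hmem, rfl⟩
    have : e i = e j := by
      rw [← hre i, ← hre j]
      exact QuotientGroup.eq.mpr hinH
    exact hij (e.injective this)
  · -- word length bound
    intro x hx
    have hSinv : Sset ∪ Sset⁻¹ = Sset := by
      apply Set.union_eq_self_of_subset_right
      intro y hy
      obtain ⟨g, hg⟩ := Set.mem_inv.mp hy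
      refine ⟨α g, ?_⟩
      rw [hα]
      rw [show (α g)⁻¹ * g = (g⁻¹ * α g)⁻¹ by group, hg, inv_inv]
    have hx' : x ∈ Submonoid.closure Sset := by
      rw [← hSinv, ← Subgroup.closure_toSubmonoid]; exact hx
    obtain ⟨l, hl, hlp⟩ := Submonoid.exists_list_of_mem_closure hx'
    have hch : ∀ y ∈ l, ∃ g : G, g⁻¹ * α g = y := hl
    set lg : List G := l.attach.map (fun p => Classical.choose (hch p.1 p.2)) with hlg
    have hlgφ : lg.map (fun g => g⁻¹ * α g) = l := by
      rw [hlg, List.map_map]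
      conv_rhs => rw [← List.attach_map_subtype_val l]
      exact List.map_congr_left fun p _ => Classical.choose_spec (hch p.1 p.2)
    obtain ⟨K, β, hT0, hβcoe, hKfin, ⟨-, hword⟩, -⟩ :=
      aux_K hLF α hα n hfixfin hfix lg.toFinset
    have hmemK : ∀ g ∈ lg, g ∈ K := fun g hg => hT0 g (List.mem_toFinset.mpr hg)
    set lK : List K := lg.attach.map (fun p => (⟨p.1, hmemK p.1 p.2⟩ : K)) with hlK
    set p : K := (lK.map fun k => k⁻¹ * β k).prod with hp
    have hdown : (lK.map fun k => k⁻¹ * β k).map (Subtype.val) = l := by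
      rw [hlK, List.map_map, List.map_map]
      conv_rhs => rw [← hlgφ, ← List.attach_map_subtype_val lg, List.map_map]
      apply List.map_congr_left
      intro q _
      show ((⟨q.1, _⟩ : K)⁻¹ * β ⟨q.1, _⟩ : K).1 = (q.1)⁻¹ * α q.1
      rw [MulMemClass.coe_mul, hβcoe]
      rfl
    have hpcoe : (p : G) = x := by
      rw [hp, SubmonoidClass.coe_list_prod, hdown, hlp]
    have hpmem : p ∈ Subgroup.closure {y : K | ∃ k : K, k⁻¹ * β k = y} := by
      rw [hp]
      apply Subgroup.list_prod_mem
      intro y hy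
      obtain ⟨k, -, rfl⟩ := List.mem_map.mp hy
      exact Subgroup.subset_closure ⟨k, rfl⟩
    obtain ⟨lk, hlk, hlkp⟩ := hword p hpmem
    refine ⟨lk.map Subtype.val, by simpa using hlk, ?_⟩
    have : (lk.map Subtype.val).map (fun g : G => g⁻¹ * α g) =
        (lk.map fun k => k⁻¹ * β k).map Subtype.val := by
      rw [List.map_map, List.map_map]
      apply List.map_congr_left
      intro k _
      show (k : G)⁻¹ * α k = ((k⁻¹ * β k : K) : G)
      rw [MulMemClass.coe_mul, hβcoe]
      rfl
    rw [this, ← SubmonoidClass.coe_list_prod, hlkp, hpcoe]
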